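/- Let Q be an n×n real positive semidefinite symmetric matrix, let D be an m×m real positive definite symmetric matrix, and let B be an m×n real matrix with full column rank (rank B = n). Then the (n+m)×(n+m) block matrix [[Q, Bᵀ], [D B, −I]], where I is the m×m identity matrix, is nonsingular. -/

import Mathlib

open Matrix

/-- If `Q ⪰ 0` is symmetric, `D ≻ 0` is symmetric, and `B` has full column
    rank, then the block matrix `[[Q, Bᵀ], [D B, -I]]` is nonsingular. -/
theorem blockMatrix_nonsingular {n m : ℕ}
    (Q : Matrix (Fin n) (Fin n) ℝ)
    (D : Matrix (Fin m) (Fin m) ℝ)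
    (B : Matrix (Fin m) (Fin n) ℝ)
    (hQ : Q.PosSemidef) (hD : D.PosDef) (hB : B.rank = n) :
    (Matrix.fromBlocks Q Bᵀ (D * B) (-(1 : Matrix (Fin m) (Fin m) ℝ))).det ≠ 0 := by
  -- B is injective on mulVec
  have hBker : LinearMap.ker B.mulVecLin = ⊥ := by
    have h := LinearMap.finrank_range_add_finrank_ker B.mulVecLin
    rw [Matrix.rank] at hB
    rw [hB] at h
    have : Module.finrank ℝ (Fin n → ℝ) = n := by simp
    rw [this] at h
    have hker0 : Module.finrank ℝ (LinearMap.ker B.mulVecLin) = 0 := by omega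
    exact Submodule.finrank_eq_zero.mp hker0
  intro hdet
  obtain ⟨v, hv, hmv⟩ := Matrix.exists_mulVec_eq_zero_iff.mpr hdet
  set x : Fin n → ℝ := v ∘ Sum.inl with hx
  set y : Fin m → ℝ := v ∘ Sum.inr with hy
  have hvelim : v = Sum.elim x y := (Sum.elim_comp_inl_inr v).symm
  rw [hvelim, Matrix.fromBlocks_mulVec] at hmv
  have h1 : Q *ᵥ x + Bᵀ *ᵥ y = 0 := by
    funext i; exact congrFun hmv (Sum.inl i)
  have h2 : (D * B) *ᵥ x + (-(1 : Matrix (Fin m) (Fin m) ℝ)) *ᵥ y = 0 := by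
    funext i; exact congrFun hmv (Sum.inr i)
  have hy' : y = D *ᵥ (B *ᵥ x) := by
    have := h2
    simp only [Matrix.neg_mulVec, Matrix.one_mulVec, Matrix.mulVec_mulVec] at this
    have : (D * B) *ᵥ x = y := by
      have h3 := this
      funext i
      have := congrFun h3 i
      simp [Pi.add_apply, Pi.neg_apply] at this
      linarith
    rw [← this, ← Matrix.mulVec_mulVec]
  -- take inner product with x
  have hdot : x ⬝ᵥ (Q *ᵥ x) + (B *ᵥ x) ⬝ᵥ (D *ᵥ (B *ᵥ x)) = 0 := by
    have := congrArg (fun w => x ⬝ᵥ w) h1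
    simp only [dotProduct_add, dotProduct_zero] at this
    rw [hy'] at this
    rw [← this]
    congr 1
    rw [Matrix.dotProduct_mulVec x Bᵀ, Matrix.vecMul_transpose]
  have hQx : 0 ≤ x ⬝ᵥ (Q *ᵥ x) := by have := hQ.dotProduct_mulVec_nonneg x; rwa [star_trivial] at this
  by_cases hxz : x = 0
  · -- then y = 0, contradiction with v ≠ 0
    have hyz : y = 0 := by rw [hy', hxz]; simp
    apply hv
    rw [hvelim, hxz, hyz]
    ext (i | i) <;> simp
  · have hBx : B *ᵥ x ≠ 0 := by
      intro h
      apply hxz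
      have := hBker ▸ LinearMap.mem_ker.mpr (by simpa using h : B.mulVecLin x = 0)
      simpa using this
    have hDx : 0 < (B *ᵥ x) ⬝ᵥ (D *ᵥ (B *ᵥ x)) := by have := hD.dotProduct_mulVec_pos hBx; rwa [star_trivial] at this
    linarith
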